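/- Let a, b > 0, ν ∈ (0,1), n ≥ 1, h = b/a, K(t) = (1+t)²/(4t), m_k = ⌊2^k ν⌋, r₀ = min{ν, 1-ν}, r_k = min{2r_{k-1}, 1−2r_{k-1}}, R_n = 1 − r_n. Define the Heinz mean H_μ(a,b) = (a^(1-μ)b^μ + a^μ b^(1-μ))/2. Then K(h^(1/2ⁿ))^{r_n} H_ν(a,b) ≤ (a+b)/2 − Σ_{k=0}^{n-1} r_k [ H_{m_k/2^k}(a,b) − 2H_{(2m_k+1)/2^{k+1}}(a,b) + H_{(m_k+1)/2^k}(a,b) ] ≤ K(h^(1/2ⁿ))^{R_n} H_ν(a,b). -/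

import Mathlib

open Real Finset

noncomputable def Kc (t : ℝ) : ℝ := (1 + t)^2 / (4 * t)

noncomputable def rseq (ν : ℝ) : ℕ → ℝ
  | 0 => min ν (1 - ν)
  | k + 1 => min (2 * rseq ν k) (1 - 2 * rseq ν k)

noncomputable def mfl (ν : ℝ) (k : ℕ) : ℝ := ⌊(2:ℝ)^k * ν⌋

noncomputable def G (a b μ : ℝ) : ℝ := a ^ (1 - μ) * b ^ μ

noncomputable def Sterm (a b ν : ℝ) (k : ℕ) : ℝ :=
  rseq ν k * (G a b (mfl ν k / 2^k) - 2 * G a b ((2 * mfl ν k + 1) / 2^(k+1)) + G a b ((mfl ν k + 1) / 2^k))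

lemma rseq_shift (μ ν : ℝ) (h0 : rseq μ 0 = rseq ν 1) : ∀ k, rseq μ k = rseq ν (k+1) := by
  intro k
  induction k with
  | zero => exact h0
  | succ k ih => show min _ _ = min _ _; rw [ih]

lemma rseq_congr (μ ν : ℝ) (h0 : rseq μ 0 = rseq ν 0) : ∀ k, rseq μ k = rseq ν k := by
  intro k
  induction k with
  | zero => exact h0
  | succ k ih => show min _ _ = min _ _; rw [ih]

lemma rseq_symm (ν : ℝ) (k : ℕ) : rseq (1 - ν) k = rseq ν k := by
  refine rseq_congr _ _ ?_ k
  show min (1-ν) (1-(1-ν)) = min ν (1-ν)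
  rw [sub_sub_cancel, min_comm]

lemma rseq_fract (ν : ℝ) (h0 : 0 ≤ ν) (h1 : ν ≤ 1) :
    ∀ k, rseq ν k = min (Int.fract ((2:ℝ)^k * ν)) (1 - Int.fract ((2:ℝ)^k * ν)) := by
  intro k
  induction k with
  | zero =>
    rw [pow_zero, one_mul]
    rcases eq_or_lt_of_le h1 with rfl | hlt
    · show min (1:ℝ) (1-1) = _
      norm_num [Int.fract_one]
    · rw [Int.fract_eq_self.2 ⟨h0, hlt⟩]; rfl
  | succ k ih =>
    have hf0 : 0 ≤ Int.fract ((2:ℝ)^k * ν) := Int.fract_nonneg _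
    have hf1 : Int.fract ((2:ℝ)^k * ν) < 1 := Int.fract_lt_one _
    obtain ⟨f, hf⟩ : ∃ f : ℝ, f = Int.fract ((2:ℝ)^k * ν) := ⟨_, rfl⟩
    rw [← hf] at ih hf0 hf1
    have hdbl : (2:ℝ)^(k+1) * ν = ((2 * ⌊(2:ℝ)^k * ν⌋ : ℤ) : ℝ) + 2*f := by
      push_cast
      rw [hf]
      rw [show (2 * (⌊(2:ℝ)^k * ν⌋:ℝ) + 2 * Int.fract ((2:ℝ)^k*ν)) =
        2 * ((⌊(2:ℝ)^k * ν⌋ : ℝ) + Int.fract ((2:ℝ)^k*ν)) from by ring, Int.floor_add_fract]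
      ring
    have hfr : Int.fract ((2:ℝ)^(k+1) * ν) = Int.fract (2*f) := by
      rw [hdbl, Int.fract_intCast_add]
    show min (2 * rseq ν k) (1 - 2 * rseq ν k) = _
    rw [ih, hfr]
    rcases lt_or_ge f (1/2) with hlt | hge
    · rw [Int.fract_eq_self.2 ⟨by linarith, by linarith⟩,
        min_eq_left (by linarith : f ≤ 1 - f)]
    · have h2f : Int.fract (2*f) = 2*f - 1 := by
        rw [show 2*f = ((1:ℤ):ℝ) + (2*f - 1) from by push_cast; ring, Int.fract_intCast_add,
          Int.fract_eq_self.2 ⟨by linarith, by linarith⟩]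
        push_cast; ring
      rw [h2f, min_eq_right (by linarith : 1 - f ≤ f), min_comm]
      congr 1 <;> ring

lemma young0_half (a b ν : ℝ) (ha : 0 < a) (hb : 0 < b) (h0 : 0 ≤ ν) (h2 : ν ≤ 1/2) :
    Kc (b/a) ^ ν * (a ^ (1-ν) * b ^ ν) ≤ (1-ν)*a + ν*b ∧
    (1-ν)*a + ν*b ≤ Kc (b/a) ^ (1-ν) * (a ^ (1-ν) * b ^ ν) := by
  obtain ⟨h, hh⟩ : ∃ h : ℝ, h = b/a := ⟨_, rfl⟩
  rw [← hh]
  have hhpos : 0 < h := hh ▸ div_pos hb ha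
  have hba : b = a * h := by rw [hh]; field_simp
  obtain ⟨t, ht⟩ : ∃ t : ℝ, t = (1+h)/2 := ⟨_, rfl⟩
  have htpos : 0 < t := by rw [ht]; linarith
  have hht : h = 2*t - 1 := by rw [ht]; ring
  have hG : a ^ (1-ν) * b ^ ν = a * h ^ ν := by
    rw [hba, Real.mul_rpow ha.le hhpos.le, ← mul_assoc, ← Real.rpow_add ha,
      sub_add_cancel, Real.rpow_one]
  have hmid : (1-ν)*a + ν*b = a * (1 - 2*ν + 2*ν*t) := by
    rw [hba, hht]; ring
  have hKc : ∀ x : ℝ, Kc h ^ x = t ^ (2*x) * h ^ (-x) := by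
    intro x
    have h1 : Kc h = t^(2:ℕ) / h := by
      show (1+h)^2/(4*h) = _
      rw [ht, div_pow, div_div]; norm_num
    rw [h1, Real.div_rpow (by positivity) hhpos.le, ← Real.rpow_natCast t 2,
      ← Real.rpow_mul htpos.le, div_eq_mul_inv, ← Real.rpow_neg hhpos.le]
    norm_num
  constructor
  · rw [hKc ν, hG, hmid]
    have hcan : t ^ (2*ν) * h ^ (-ν) * (a * h ^ ν) = a * t ^ (2*ν) := by
      rw [show t ^ (2*ν) * h ^ (-ν) * (a * h ^ ν) = a * t^(2*ν) * (h^(-ν) * h^ν) from by ring,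
        ← Real.rpow_add hhpos, neg_add_cancel, Real.rpow_zero, mul_one]
    rw [hcan]
    have amgm := Real.geom_mean_le_arith_mean2_weighted (by linarith : (0:ℝ) ≤ 1 - 2*ν)
      (by linarith : (0:ℝ) ≤ 2*ν) zero_le_one htpos.le (by ring)
    rw [Real.one_rpow, one_mul, mul_one] at amgm
    have := mul_le_mul_of_nonneg_left amgm ha.le
    linarith [this]
  · rw [hKc (1-ν), hG, hmid]
    have hprod : 0 < h ^ (1-2*ν) * t ^ (2*ν) := by positivity
    have g1 : h ^ (1-2*ν) * t ^ (2*ν) ≤ (1-2*ν)*h + (2*ν)*t :=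
      Real.geom_mean_le_arith_mean2_weighted (by linarith) (by linarith) hhpos.le htpos.le (by ring)
    have g2 : (1 - 2*ν + 2*ν*t) * ((1-2*ν)*h + (2*ν)*t) ≤ t*t := by
      rw [hht]; nlinarith [sq_nonneg ((1-2*ν)*(t-1))]
    have hc0 : 0 ≤ 1 - 2*ν + 2*ν*t := by nlinarith
    have g3 : (1 - 2*ν + 2*ν*t) * (h ^ (1-2*ν) * t ^ (2*ν)) ≤ t*t :=
      le_trans (mul_le_mul_of_nonneg_left g1 hc0) g2
    have hid : t ^ (2*(1-ν)) * h ^ (-(1-ν)) * (a * h ^ ν) * (h ^ (1-2*ν) * t ^ (2*ν)) = a * (t*t) := by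
      rw [show t ^ (2*(1-ν)) * h ^ (-(1-ν)) * (a * h ^ ν) * (h ^ (1-2*ν) * t ^ (2*ν))
        = a * ((t ^ (2*(1-ν)) * t ^ (2*ν)) * (h ^ (-(1-ν)) * (h ^ ν * h ^ (1-2*ν)))) from by ring,
        ← Real.rpow_add htpos, ← Real.rpow_add hhpos, ← Real.rpow_add hhpos,
        show 2*(1-ν) + 2*ν = (2:ℝ) from by ring, show (-(1-ν) + (ν + (1-2*ν))) = (0:ℝ) from by ring,
        Real.rpow_zero, mul_one, show (2:ℝ) = ((2:ℕ):ℝ) from by norm_num, Real.rpow_natCast]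
      ring
    refine le_of_mul_le_mul_right ?_ hprod
    calc a * (1 - 2*ν + 2*ν*t) * (h ^ (1-2*ν) * t ^ (2*ν))
        ≤ a * (t*t) := by rw [mul_assoc]; exact mul_le_mul_of_nonneg_left g3 ha.le
      _ = _ := hid.symm

lemma Kc_symm (x y : ℝ) (hx : 0 < x) (hy : 0 < y) : Kc (x/y) = Kc (y/x) := by
  unfold Kc
  field_simp
  ring

lemma young0 (a b ν : ℝ) (ha : 0 < a) (hb : 0 < b) (h0 : 0 ≤ ν) (h1 : ν ≤ 1) :
    Kc (b/a) ^ rseq ν 0 * (a ^ (1-ν) * b ^ ν) ≤ (1-ν)*a + ν*b ∧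
    (1-ν)*a + ν*b ≤ Kc (b/a) ^ (1 - rseq ν 0) * (a ^ (1-ν) * b ^ ν) := by
  rcases le_or_gt ν (1/2) with hc | hc
  · have hr : rseq ν 0 = ν := min_eq_left (by linarith)
    rw [hr]
    exact young0_half a b ν ha hb h0 hc
  · have hr : rseq ν 0 = 1 - ν := min_eq_right (by linarith)
    obtain ⟨l, u⟩ := young0_half b a (1-ν) hb ha (by linarith) (by linarith)
    rw [Kc_symm a b ha hb, show (1:ℝ) - (1-ν) = ν from by ring] at l u
    rw [hr, show (1:ℝ) - (1-ν) = ν from by ring]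
    constructor
    · calc Kc (b/a) ^ (1-ν) * (a ^ (1-ν) * b ^ ν)
          = Kc (b/a) ^ (1-ν) * (b ^ ν * a ^ (1-ν)) := by ring
        _ ≤ ν*b + (1-ν)*a := l
        _ = (1-ν)*a + ν*b := by ring
    · calc (1-ν)*a + ν*b = ν*b + (1-ν)*a := by ring
        _ ≤ Kc (b/a) ^ ν * (b ^ ν * a ^ (1-ν)) := u
        _ = Kc (b/a) ^ ν * (a ^ (1-ν) * b ^ ν) := by ring

lemma G_left (a b : ℝ) (ha : 0 < a) (hb : 0 < b) (μ : ℝ) :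
    G a (a ^ ((1:ℝ)/2) * b ^ ((1:ℝ)/2)) μ = G a b (μ/2) := by
  unfold G
  rw [Real.mul_rpow (Real.rpow_nonneg ha.le _) (Real.rpow_nonneg hb.le _),
    ← Real.rpow_mul ha.le, ← Real.rpow_mul hb.le, ← mul_assoc, ← Real.rpow_add ha,
    show 1 - μ + 1/2*μ = 1 - μ/2 from by ring, show (1:ℝ)/2*μ = μ/2 from by ring]

lemma G_right (a b : ℝ) (ha : 0 < a) (hb : 0 < b) (μ : ℝ) :
    G (a ^ ((1:ℝ)/2) * b ^ ((1:ℝ)/2)) b μ = G a b ((1+μ)/2) := by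
  unfold G
  rw [Real.mul_rpow (Real.rpow_nonneg ha.le _) (Real.rpow_nonneg hb.le _),
    ← Real.rpow_mul ha.le, ← Real.rpow_mul hb.le, mul_assoc, ← Real.rpow_add hb,
    show (1:ℝ)/2*(1-μ) + μ = (1+μ)/2 from by ring,
    show (1:ℝ)/2*(1-μ) = 1 - (1+μ)/2 from by ring]

lemma young (n : ℕ) : ∀ a b ν : ℝ, 0 < a → 0 < b → 0 ≤ ν → ν ≤ 1 →
    Kc ((b/a) ^ ((1:ℝ)/2^n)) ^ rseq ν n * (a ^ (1-ν) * b ^ ν)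
      ≤ (1-ν)*a + ν*b - ∑ k ∈ Finset.range n, Sterm a b ν k ∧
    (1-ν)*a + ν*b - ∑ k ∈ Finset.range n, Sterm a b ν k
      ≤ Kc ((b/a) ^ ((1:ℝ)/2^n)) ^ (1 - rseq ν n) * (a ^ (1-ν) * b ^ ν) := by
  induction n with
  | zero =>
    intro a b ν ha hb h0 h1
    rw [Finset.sum_range_zero, pow_zero, div_one, Real.rpow_one, sub_zero]
    exact young0 a b ν ha hb h0 h1
  | succ n IH =>
    intro a b ν ha hb h0 h1
    obtain ⟨c, hcdef⟩ : ∃ c : ℝ, c = a ^ ((1:ℝ)/2) * b ^ ((1:ℝ)/2) := ⟨_, rfl⟩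
    have hcpos : 0 < c := by rw [hcdef]; positivity
    -- shared facts
    have hS0 : Sterm a b ν 0 = rseq ν 0 * (a - 2*c + b) := by
      rcases eq_or_lt_of_le h1 with rfl | hlt
      · have : rseq (1:ℝ) 0 = 0 := by show min (1:ℝ) (1-1) = 0; norm_num
        unfold Sterm; rw [this]; ring
      · have hm0 : mfl ν 0 = 0 := by
          unfold mfl
          rw [pow_zero, one_mul, Int.floor_eq_zero_iff.2 ⟨h0, hlt⟩, Int.cast_zero]
        unfold Sterm
        rw [hm0]
        have e0 : G a b ((0:ℝ) / 2^(0:ℕ)) = a := by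
          norm_num [G]
        have e1 : G a b (((0:ℝ)+1) / 2^(0:ℕ)) = b := by
          norm_num [G]
        have ehalf : G a b ((2*(0:ℝ)+1) / 2^(0+1:ℕ)) = c := by
          rw [hcdef]
          unfold G
          norm_num
        rw [e0, e1, ehalf]
    rcases le_or_gt ν (1/2) with hc | hc
    · -- ν ≤ 1/2 : recurse with (a, c, 2ν)
      have hr0 : rseq ν 0 = ν := min_eq_left (by linarith)
      have hrs : ∀ k, rseq (2*ν) k = rseq ν (k+1) := by
        refine rseq_shift _ _ ?_
        show min (2*ν) (1-2*ν) = min (2*rseq ν 0) (1-2*rseq ν 0)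
        rw [hr0]
      have hmfl : ∀ k, mfl (2*ν) k = mfl ν (k+1) := by
        intro k
        unfold mfl
        rw [show (2:ℝ)^k * (2*ν) = (2:ℝ)^(k+1) * ν from by ring]
      have hGc : ∀ μ, G a c μ = G a b (μ/2) := by
        intro μ; rw [hcdef]; exact G_left a b ha hb μ
      have hSt : ∀ k, Sterm a c (2*ν) k = Sterm a b ν (k+1) := by
        intro k
        unfold Sterm
        rw [hrs k, hmfl k, hGc, hGc, hGc,
          show mfl ν (k+1) / 2^k / 2 = mfl ν (k+1) / 2^(k+1) from by rw [div_div, ← pow_succ],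
          show (2 * mfl ν (k+1) + 1) / 2^(k+1) / 2 = (2 * mfl ν (k+1) + 1) / 2^(k+1+1) from by
            rw [div_div, ← pow_succ],
          show (mfl ν (k+1) + 1) / 2^k / 2 = (mfl ν (k+1) + 1) / 2^(k+1) from by
            rw [div_div, ← pow_succ]]
      have hca : c/a = (b/a) ^ ((1:ℝ)/2) := by
        rw [Real.div_rpow hb.le ha.le, hcdef,
          div_eq_div_iff ha.ne' (ne_of_gt (Real.rpow_pos_of_pos ha _)),
          show a ^ ((1:ℝ)/2) * b ^ ((1:ℝ)/2) * a ^ ((1:ℝ)/2)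
            = (a ^ ((1:ℝ)/2) * a ^ ((1:ℝ)/2)) * b ^ ((1:ℝ)/2) from by ring,
          ← Real.rpow_add ha]
        norm_num [mul_comm]
      have hKarg : (c/a) ^ ((1:ℝ)/2^n) = (b/a) ^ ((1:ℝ)/2^(n+1)) := by
        rw [hca, ← Real.rpow_mul (div_nonneg hb.le ha.le)]
        congr 1
        rw [pow_succ]
        ring
      have hGν : a ^ (1-2*ν) * c ^ (2*ν) = a ^ (1-ν) * b ^ ν := by
        have := hGc (2*ν)
        unfold G at this
        rw [this, show 2*ν/2 = ν from by ring]
      have hsum : ∑ k ∈ Finset.range (n+1), Sterm a b ν k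
          = Sterm a b ν 0 + ∑ k ∈ Finset.range n, Sterm a c (2*ν) k := by
        rw [Finset.sum_range_succ', add_comm]
        congr 1
        exact Finset.sum_congr rfl (fun k _ => (hSt k).symm)
      obtain ⟨l, u⟩ := IH a c (2*ν) ha hcpos (by linarith) (by linarith)
      rw [hKarg, hrs n, hGν] at l u
      rw [hsum, hS0, hr0]
      constructor
      · linarith [l]
      · linarith [u]
    · -- ν > 1/2 : recurse with (c, b, 2ν-1)
      have hr0 : rseq ν 0 = 1 - ν := min_eq_right (by linarith)
      have hrs : ∀ k, rseq (2*ν-1) k = rseq ν (k+1) := by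
        refine rseq_shift _ _ ?_
        show min (2*ν-1) (1-(2*ν-1)) = min (2*rseq ν 0) (1-2*rseq ν 0)
        rw [hr0, min_comm]
        congr 1 <;> ring
      have hmfl : ∀ k, mfl (2*ν-1) k = mfl ν (k+1) - 2^k := by
        intro k
        unfold mfl
        rw [show (2:ℝ)^k * (2*ν-1) = (2:ℝ)^(k+1) * ν - ((2^k : ℤ) : ℝ) from by push_cast; ring,
          Int.floor_sub_intCast]
        push_cast
        ring
      have hGc : ∀ μ, G c b μ = G a b ((1+μ)/2) := by
        intro μ; rw [hcdef]; exact G_right a b ha hb μ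
      have h2k : ∀ k : ℕ, ((2:ℝ)^k) ≠ 0 := fun k => by positivity
      have hSt : ∀ k, Sterm c b (2*ν-1) k = Sterm a b ν (k+1) := by
        intro k
        unfold Sterm
        rw [hrs k, hmfl k, hGc, hGc, hGc,
          show (1 + (mfl ν (k+1) - 2^k) / 2^k)/2 = mfl ν (k+1) / 2^(k+1) from by
            rw [pow_succ]; field_simp; try ring
            ,
          show (1 + (2 * (mfl ν (k+1) - 2^k) + 1) / 2^(k+1))/2
              = (2 * mfl ν (k+1) + 1) / 2^(k+1+1) from by
            rw [pow_succ _ (k+1), pow_succ _ k]; field_simp; try ring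
            ,
          show (1 + ((mfl ν (k+1) - 2^k) + 1) / 2^k)/2 = (mfl ν (k+1) + 1) / 2^(k+1) from by
            rw [pow_succ]; field_simp; try ring
            ]
      have hca : b/c = (b/a) ^ ((1:ℝ)/2) := by
        rw [Real.div_rpow hb.le ha.le,
          div_eq_div_iff (ne_of_gt hcpos) (ne_of_gt (Real.rpow_pos_of_pos ha _)), hcdef,
          show b ^ ((1:ℝ)/2) * (a ^ ((1:ℝ)/2) * b ^ ((1:ℝ)/2))
            = a ^ ((1:ℝ)/2) * (b ^ ((1:ℝ)/2) * b ^ ((1:ℝ)/2)) from by ring,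
          ← Real.rpow_add hb]
        norm_num [mul_comm]
      have hKarg : (b/c) ^ ((1:ℝ)/2^n) = (b/a) ^ ((1:ℝ)/2^(n+1)) := by
        rw [hca, ← Real.rpow_mul (div_nonneg hb.le ha.le)]
        congr 1
        rw [pow_succ]
        ring
      have hGν : c ^ (1-(2*ν-1)) * b ^ (2*ν-1) = a ^ (1-ν) * b ^ ν := by
        have := hGc (2*ν-1)
        unfold G at this
        rw [this, show (1+(2*ν-1))/2 = ν from by ring]
      have hsum : ∑ k ∈ Finset.range (n+1), Sterm a b ν k
          = Sterm a b ν 0 + ∑ k ∈ Finset.range n, Sterm c b (2*ν-1) k := by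
        rw [Finset.sum_range_succ', add_comm]
        congr 1
        exact Finset.sum_congr rfl (fun k _ => (hSt k).symm)
      obtain ⟨l, u⟩ := IH c b (2*ν-1) hcpos hb (by linarith) (by linarith)
      rw [hKarg, hrs n, hGν] at l u
      rw [hsum, hS0, hr0]
      constructor
      · linarith [l]
      · linarith [u]

theorem stmt15 (a b ν : ℝ) (ha : 0 < a) (hb : 0 < b) (hν : ν ∈ Set.Ioo (0:ℝ) 1)
    (n : ℕ) (hn : 1 ≤ n) (h : ℝ) (hh : h = b / a) (H : ℝ → ℝ)
    (hH : H = (fun μ : ℝ => (a ^ (1 - μ) * b ^ μ + a ^ μ * b ^ (1 - μ)) / 2)) :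
    Kc (h ^ ((1:ℝ)/2^n)) ^ rseq ν n * H ν ≤ (a + b) / 2 - (∑ k ∈ Finset.range n, rseq ν k * (H (mfl ν k / 2^k) - 2 * H ((2 * mfl ν k + 1) / 2^(k+1)) + H ((mfl ν k + 1) / 2^k))) ∧
    (a + b) / 2 - (∑ k ∈ Finset.range n, rseq ν k * (H (mfl ν k / 2^k) - 2 * H ((2 * mfl ν k + 1) / 2^(k+1)) + H ((mfl ν k + 1) / 2^k))) ≤ Kc (h ^ ((1:ℝ)/2^n)) ^ (1 - rseq ν n) * H ν := by
  obtain ⟨hν0, hν1⟩ := hν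
  subst hh
  have hHG : ∀ x : ℝ, H x = (G a b x + G a b (1-x))/2 := by
    intro x
    rw [hH]
    simp only [G, sub_sub_cancel]
  have hHν : Kc ((b/a) ^ ((1:ℝ)/2^n)) ^ rseq ν n * H ν
      = (Kc ((b/a) ^ ((1:ℝ)/2^n)) ^ rseq ν n * (a ^ (1-ν) * b ^ ν)
        + Kc ((b/a) ^ ((1:ℝ)/2^n)) ^ rseq ν n * (a ^ (1-(1-ν)) * b ^ (1-ν)))/2 := by
    rw [hHG ν]; unfold G; ring
  have hHν' : Kc ((b/a) ^ ((1:ℝ)/2^n)) ^ (1 - rseq ν n) * H ν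
      = (Kc ((b/a) ^ ((1:ℝ)/2^n)) ^ (1 - rseq ν n) * (a ^ (1-ν) * b ^ ν)
        + Kc ((b/a) ^ ((1:ℝ)/2^n)) ^ (1 - rseq ν n) * (a ^ (1-(1-ν)) * b ^ (1-ν)))/2 := by
    rw [hHG ν]; unfold G; ring
  have h2k : ∀ k : ℕ, ((2:ℝ)^k) ≠ 0 := fun k => by positivity
  have termadd : ∀ k, Sterm a b ν k + Sterm a b (1-ν) k
      = 2 * (rseq ν k * (H (mfl ν k / 2^k) - 2 * H ((2 * mfl ν k + 1) / 2^(k+1)) + H ((mfl ν k + 1) / 2^k))) := by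
    intro k
    by_cases hfr : Int.fract ((2:ℝ)^k * ν) = 0
    · have hr1 : rseq ν k = 0 := by
        rw [rseq_fract ν hν0.le hν1.le k, hfr]
        norm_num
      have hr2 : rseq (1-ν) k = 0 := by rw [rseq_symm]; exact hr1
      unfold Sterm
      rw [hr1, hr2]
      ring
    · have hmν : mfl ν k = (2:ℝ)^k*ν - Int.fract ((2:ℝ)^k*ν) := by
        unfold mfl
        exact (Int.self_sub_fract _).symm
      have hneg : Int.fract ((2:ℝ)^k*(1-ν)) = 1 - Int.fract ((2:ℝ)^k*ν) := by
        rw [show (2:ℝ)^k*(1-ν) = ((2^k:ℤ):ℝ) + (-((2:ℝ)^k*ν)) from by push_cast; ring,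
          Int.fract_intCast_add, Int.fract_neg hfr]
      have hm2 : mfl (1-ν) k = 2^k - 1 - mfl ν k := by
        have : mfl (1-ν) k = (2:ℝ)^k*(1-ν) - Int.fract ((2:ℝ)^k*(1-ν)) := by
          unfold mfl
          exact (Int.self_sub_fract _).symm
        rw [this, hneg, hmν]
        ring
      unfold Sterm
      rw [rseq_symm, hm2,
        show ((2:ℝ)^k - 1 - mfl ν k) / 2^k = 1 - (mfl ν k + 1)/2^k from by
          field_simp; ring,
        show (2*((2:ℝ)^k - 1 - mfl ν k) + 1) / 2^(k+1) = 1 - (2*mfl ν k + 1)/2^(k+1) from by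
          rw [pow_succ]; field_simp; ring,
        show (((2:ℝ)^k - 1 - mfl ν k) + 1) / 2^k = 1 - mfl ν k/2^k from by
          field_simp; ring,
        hHG (mfl ν k / 2^k), hHG ((2*mfl ν k + 1) / 2^(k+1)), hHG ((mfl ν k + 1) / 2^k)]
      ring
  have hsum2 : (∑ k ∈ Finset.range n, Sterm a b ν k) + (∑ k ∈ Finset.range n, Sterm a b (1-ν) k)
      = 2 * (∑ k ∈ Finset.range n, rseq ν k * (H (mfl ν k / 2^k) - 2 * H ((2 * mfl ν k + 1) / 2^(k+1)) + H ((mfl ν k + 1) / 2^k))) := by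
    rw [← Finset.sum_add_distrib, Finset.mul_sum]
    exact Finset.sum_congr rfl (fun k _ => termadd k)
  obtain ⟨l1, u1⟩ := young n a b ν ha hb hν0.le hν1.le
  obtain ⟨l2, u2⟩ := young n a b (1-ν) ha hb (by linarith) (by linarith)
  rw [rseq_symm ν n] at l2 u2
  constructor
  · rw [hHν]
    linarith [l1, l2, hsum2]
  · rw [hHν']
    linarith [u1, u2, hsum2]
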